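/- arXiv:2003.13061 — 2 statements merged into one kernel-verified Lean document; each statement's English description precedes it below -/
import Mathlib

section
/- A numerical semigroup S is 2-AGL if and only if 2K = 3K and 2K \ K = {F(S) − x, F(S)} for some minimal generator x of S. -/
open Set Pointwise

def IsNumSgrp (S : Set ℤ) : Prop :=
  0 ∈ S ∧ (∀ a ∈ S, ∀ b ∈ S, a + b ∈ S) ∧ (∀ a ∈ S, 0 ≤ a) ∧ ∃ c : ℤ, ∀ z, c ≤ z → z ∈ S

def maxId (S : Set ℤ) : Set ℤ := S \ {0}

def subI (I J : Set ℤ) : Set ℤ := {x : ℤ | ∀ j ∈ J, x + j ∈ I}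

def PF (S I : Set ℤ) : Set ℤ := subI I (maxId S) \ I

def stdK (S : Set ℤ) (F : ℤ) : Set ℤ := {x : ℤ | 0 ≤ x ∧ F - x ∉ S}

def IsFrobOf (I : Set ℤ) (FI : ℤ) : Prop := FI ∉ I ∧ ∀ z : ℤ, FI < z → z ∈ I

def IsRelIdeal (S I : Set ℤ) : Prop :=
  I.Nonempty ∧ (∀ i ∈ I, ∀ s ∈ S, i + s ∈ I) ∧ ∃ z ∈ S, ∀ i ∈ I, z + i ∈ S

def tilde (I : Set ℤ) (d : ℤ) : Set ℤ := (fun x => x + d) '' I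

def IsAlmostCanonical (S : Set ℤ) (F : ℤ) (I : Set ℤ) : Prop :=
  ∃ FI : ℤ, IsFrobOf I FI ∧ subI (tilde I (F - FI)) (maxId S) = stdK S F ∪ {F}

def IsMinGen (S : Set ℤ) (x : ℤ) : Prop := x ∈ maxId S \ (maxId S + maxId S)

def IsMult (S : Set ℤ) (e : ℤ) : Prop := e ∈ maxId S ∧ ∀ m ∈ maxId S, e ≤ m

def genK (S : Set ℤ) (F : ℤ) : Set ℤ := (AddSubmonoid.closure (stdK S F) : Set ℤ)

def nK (K : Set ℤ) : ℕ → Set ℤ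
  | 0 => {0}
  | 1 => K
  | n + 2 => nK K (n + 1) + K

def IsGAS (S : Set ℤ) (F : ℤ) : Prop :=
  stdK S F + stdK S F = stdK S F ∨
  ∃ X : Finset ℤ, (∀ x ∈ X, IsMinGen S x) ∧ (∀ x ∈ X, ∀ y ∈ X, x - y ∉ PF S S) ∧
    (stdK S F + stdK S F) \ stdK S F = (fun x => F - x) '' (X : Set ℤ) ∪ {F}

def IsAlmostSym (S : Set ℤ) (F : ℤ) : Prop := subI S (maxId S) = stdK S F ∪ {F}

def apery (I : Set ℤ) (e : ℤ) : Set ℤ := {i ∈ I | i - e ∉ I}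

-- helpers
lemma mem_stdK' {S : Set ℤ} {F x : ℤ} : x ∈ stdK S F ↔ 0 ≤ x ∧ F - x ∉ S := Iff.rfl

lemma closure_subset_of_submonoid {K T : Set ℤ} (h0 : (0:ℤ) ∈ T)
    (hadd : ∀ a ∈ T, ∀ b ∈ T, a + b ∈ T) (hKT : K ⊆ T) :
    (AddSubmonoid.closure K : Set ℤ) ⊆ T := by
  have h : AddSubmonoid.closure K ≤ ⟨⟨T, fun {a b} ha hb => hadd a ha b hb⟩, h0⟩ :=
    AddSubmonoid.closure_le.mpr hKT
  exact fun z hz => h hz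

lemma add_subset_closure {K : Set ℤ} : K + K ⊆ (AddSubmonoid.closure K : Set ℤ) := by
  rintro z ⟨a, ha, b, hb, rfl⟩
  exact add_mem (AddSubmonoid.subset_closure ha) (AddSubmonoid.subset_closure hb)

section main
variable {S : Set ℤ} {F : ℤ}

lemma zero_mem_stdK (hF : IsFrobOf S F) : (0:ℤ) ∈ stdK S F :=
  ⟨le_refl 0, by simpa using hF.1⟩

lemma F_not_mem_stdK (hS : IsNumSgrp S) : F ∉ stdK S F := by
  intro h; exact h.2 (by simpa using hS.1)

lemma S_subset_stdK (hS : IsNumSgrp S) (hF : IsFrobOf S F) : S ⊆ stdK S F := by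
  intro s hs
  refine ⟨hS.2.2.1 s hs, fun hFs => hF.1 ?_⟩
  have h := hS.2.1 _ hFs _ hs
  simpa using h

lemma stdK_add_S (hS : IsNumSgrp S) {k s : ℤ} (hk : k ∈ stdK S F) (hsS : s ∈ S) :
    k + s ∈ stdK S F := by
  refine ⟨by have := hS.2.2.1 s hsS; linarith [hk.1], fun h => hk.2 ?_⟩
  have h2 := hS.2.1 _ h _ hsS
  have h3 : F - (k + s) + s = F - k := by ring
  rwa [h3] at h2

lemma K_subset_2K (hF : IsFrobOf S F) : stdK S F ⊆ stdK S F + stdK S F := by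
  intro k hk
  have := Set.add_mem_add (zero_mem_stdK hF) hk
  simpa using this

lemma twoK_nonneg {z : ℤ} (hz : z ∈ stdK S F + stdK S F) : 0 ≤ z := by
  rcases hz with ⟨a, ha, b, hb, rfl⟩
  have := ha.1; have := hb.1
  show 0 ≤ a + b
  linarith

lemma twoK_add_S (hS : IsNumSgrp S) {w s : ℤ} (hw : w ∈ stdK S F + stdK S F) (hsS : s ∈ S) :
    w + s ∈ stdK S F + stdK S F := by
  rcases hw with ⟨a, ha, b, hb, rfl⟩
  have h := Set.add_mem_add ha (stdK_add_S hS hb hsS)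
  have h2 : a + (b + s) = a + b + s := by ring
  rwa [h2] at h

lemma F_pos (hS : IsNumSgrp S) (hF : IsFrobOf S F) (hF2K : F ∈ stdK S F + stdK S F) :
    0 < F := by
  have h0 : 0 ≤ F := twoK_nonneg hF2K
  rcases h0.lt_or_eq with h | h
  · exact h
  · exact absurd (h ▸ hS.1) hF.1

lemma not_mem_stdK_of (hS : IsNumSgrp S) {a : ℤ} (h0 : 0 ≤ a) (ha : a ∉ stdK S F) :
    F - a ∈ S := by
  by_contra h
  exact ha ⟨h0, h⟩

lemma forward_aux (hS : IsNumSgrp S) (hF : IsFrobOf S F)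
    (a : ℤ) (haF : a ≠ F)
    (hset : genK S F \ stdK S F = {a, F}) :
    (stdK S F + stdK S F = stdK S F + stdK S F + stdK S F ∧
     ∃ x : ℤ, IsMinGen S x ∧ (stdK S F + stdK S F) \ stdK S F = {F - x, F}) := by
  set K := stdK S F with hKdef
  have hFgen : F ∈ genK S F \ K := by rw [hset]; right; rfl
  have hagen : a ∈ genK S F \ K := by rw [hset]; left; rfl
  have haK : a ∉ K := hagen.2
  have hFK : F ∉ K := hFgen.2
  -- K not contained in S
  have hKnS : ¬ K ⊆ S := by
    intro hsub
    have hgsub : genK S F ⊆ K :=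
      closure_subset_of_submonoid (hsub.trans (S_subset_stdK hS hF) (zero_mem_stdK hF)) ?_ ?_
    · exact hFK (hgsub hFgen.1)
    · exact fun x hx y hy => (S_subset_stdK hS hF) (hS.2.1 x (hsub hx) y (hsub hy))
    · exact hsub.trans (S_subset_stdK hS hF)
  obtain ⟨u, huK, huS⟩ := Set.not_subset.mp hKnS
  have huF : u ≤ F := by
    by_contra h
    exact huS (hF.2 u (by linarith))
  have hFuK : F - u ∈ K := ⟨by linarith, by simpa using huS⟩
  have hF2K : F ∈ K + K := by
    have h := Set.add_mem_add huK hFuK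
    have h2 : u + (F - u) = F := by ring
    rwa [h2] at h
  have h2Kgen : K + K ⊆ genK S F := add_subset_closure
  -- step A : a ∈ K + K
  have ha2K : a ∈ K + K := by
    by_contra hna
    have h2sub : K + K ⊆ K ∪ {F} := by
      intro z hz
      by_cases hzK : z ∈ K
      · exact Or.inl hzK
      · have : z ∈ genK S F \ K := ⟨h2Kgen hz, hzK⟩
        rw [hset] at this
        rcases this with h | h
        · exact absurd (h ▸ hz) hna
        · exact Or.inr h
    have hFk : ∀ k ∈ K, F + k ∈ K + K := by
      intro k hk
      rcases eq_or_lt_of_le hk.1 with h | h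
      · have : F + k = F := by omega
        rw [this]; exact hF2K
      · exact K_subset_2K hF (S_subset_stdK hS hF (hF.2 _ (by linarith)))
    have hclosed : ∀ w1 ∈ K + K, ∀ w2 ∈ K + K, w1 + w2 ∈ K + K := by
      intro w1 hw1 w2 hw2
      rcases h2sub hw1 with h1 | h1
      · rcases h2sub hw2 with h2 | h2
        · exact Set.add_mem_add h1 h2
        · have h2' : w2 = F := h2
          rw [h2', add_comm w1 F]; exact hFk _ h1
      · have h1' : w1 = F := h1
        rcases h2sub hw2 with h2 | h2
        · rw [h1']; exact hFk _ h2
        · have h2' : w2 = F := h2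
          rw [h1', h2']
          have hFpos := F_pos hS hF hF2K
          exact K_subset_2K hF (S_subset_stdK hS hF (hF.2 _ (by linarith)))
    have hgsub : genK S F ⊆ K + K :=
      closure_subset_of_submonoid
        (by simpa using Set.add_mem_add (zero_mem_stdK hF) (zero_mem_stdK hF))
        hclosed (K_subset_2K hF)
    exact hna (hgsub hagen.1)
  -- 2K \ K = {a, F}
  have h2Kset : (K + K) \ K = {a, F} := by
    apply Set.Subset.antisymm
    · intro z hz
      have : z ∈ genK S F \ K := ⟨h2Kgen hz.1, hz.2⟩
      rw [hset] at this; exact this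
    · intro z hz
      rcases hz with h | h
      · exact h ▸ ⟨ha2K, haK⟩
      · have h' : z = F := h
        exact h' ▸ ⟨hF2K, hFK⟩
  -- step B : 3K ⊆ 2K
  have h3sub : K + K + K ⊆ K + K := by
    rintro z ⟨w, hw, k, hk, rfl⟩
    show w + k ∈ K + K
    by_cases hwK : w ∈ K
    · exact Set.add_mem_add hwK hk
    · have hw2 : w ∈ (K + K) \ K := ⟨hw, hwK⟩
      rw [h2Kset] at hw2
      rcases eq_or_lt_of_le hk.1 with hk0 | hk0
      · have : w + k = w := by omega
        rw [this]; exact hw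
      · rcases hw2 with h | h
        · -- w = a
          subst h
          have hzgen : w + k ∈ genK S F :=
            add_mem (h2Kgen ha2K) (AddSubmonoid.subset_closure hk)
          by_cases hzK : w + k ∈ K
          · exact K_subset_2K hF hzK
          · have : w + k ∈ genK S F \ K := ⟨hzgen, hzK⟩
            rw [hset] at this
            rcases this with h2 | h2
            · omega
            · have h2' : w + k = F := h2
              rw [h2']; exact hF2K
        · -- w = F
          have h' : w = F := h
          subst h'
          exact K_subset_2K hF (S_subset_stdK hS hF (hF.2 _ (by linarith)))
  have h3eq : K + K = K + K + K := by
    apply Set.Subset.antisymm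
    · intro z hz
      have h := Set.add_mem_add hz (zero_mem_stdK hF)
      simpa using h
    · exact h3sub
  refine ⟨h3eq, F - a, ?_, ?_⟩
  · -- IsMinGen S (F - a)
    have ha0 : 0 ≤ a := twoK_nonneg ha2K
    have hFaS : F - a ∈ S := not_mem_stdK_of hS ha0 haK
    constructor
    · exact ⟨hFaS, by simp; omega⟩
    · rintro ⟨s, hs, t, ht, hst⟩
      have hst' : s + t = F - a := hst
      have hsS : s ∈ S := hs.1
      have hs0 : s ≠ 0 := by simpa using hs.2
      have hspos : 0 < s := lt_of_le_of_ne (hS.2.2.1 s hsS) (Ne.symm hs0)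
      have htS : t ∈ S := ht.1
      have ht0 : t ≠ 0 := by simpa using ht.2
      have has2K : a + s ∈ K + K := twoK_add_S hS ha2K hsS
      have hasK : a + s ∉ K := by
        intro h
        apply h.2
        have : F - (a + s) = t := by omega
        rw [this]; exact htS
      have : a + s ∈ (K + K) \ K := ⟨has2K, hasK⟩
      rw [h2Kset] at this
      rcases this with h | h
      · omega
      · have h' : a + s = F := h
        omega
  · have h : F - (F - a) = a := by ring
    rw [h]; exact h2Kset

theorem stmt8 (S : Set ℤ) (hS : IsNumSgrp S) (F : ℤ) (hF : IsFrobOf S F) :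
    (genK S F \ stdK S F).ncard = 2 ↔
      (stdK S F + stdK S F = stdK S F + stdK S F + stdK S F ∧
       ∃ x : ℤ, IsMinGen S x ∧ (stdK S F + stdK S F) \ stdK S F = {F - x, F}) := by
  constructor
  · intro h2
    obtain ⟨a, b, hab, hset⟩ := Set.ncard_eq_two.mp h2
    -- K not contained in S, so F ∈ 2K
    have hFK : F ∉ stdK S F := F_not_mem_stdK hS
    have hKnS : ¬ stdK S F ⊆ S := by
      intro hsub
      have hgsub : genK S F ⊆ stdK S F :=
        closure_subset_of_submonoid (hsub.trans (S_subset_stdK hS hF) (zero_mem_stdK hF))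
          (fun x hx y hy => (S_subset_stdK hS hF) (hS.2.1 x (hsub hx) y (hsub hy)))
          (hsub.trans (S_subset_stdK hS hF))
      have hmem : a ∈ genK S F \ stdK S F := by rw [hset]; left; rfl
      exact hmem.2 (hgsub hmem.1)
    obtain ⟨u, huK, huS⟩ := Set.not_subset.mp hKnS
    have huF : u ≤ F := by
      by_contra h
      exact huS (hF.2 u (by linarith))
    have hFuK : F - u ∈ stdK S F := ⟨by linarith [huK.1], by simpa using huS⟩
    have hF2K : F ∈ stdK S F + stdK S F := by
      have h := Set.add_mem_add huK hFuK
      have h2 : u + (F - u) = F := by ring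
      rwa [h2] at h
    have hFgen : F ∈ genK S F \ stdK S F := ⟨add_subset_closure hF2K, hFK⟩
    rw [hset] at hFgen
    rcases hFgen with h | h
    · -- F = a
      have h' : F = a := h
      subst h'
      have hset' : genK S F \ stdK S F = {b, F} := by rw [hset, Set.pair_comm]
      exact forward_aux hS hF b (Ne.symm hab) hset'
    · -- F = b
      have h' : F = b := h
      subst h'
      exact forward_aux hS hF a hab hset
  · rintro ⟨h3, x, hx, hdiff⟩
    have hclosed : (stdK S F + stdK S F) + (stdK S F + stdK S F) = stdK S F + stdK S F := by
      rw [← add_assoc, ← h3, ← h3]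
    have hgen : genK S F = stdK S F + stdK S F := by
      apply Set.Subset.antisymm
      · exact closure_subset_of_submonoid
          (by simpa using Set.add_mem_add (zero_mem_stdK hF) (zero_mem_stdK hF))
          (fun a ha b hb => by
            have h := Set.add_mem_add ha hb
            rwa [hclosed] at h)
          (K_subset_2K hF)
      · exact add_subset_closure
    have hxne : x ≠ 0 := by simpa using hx.1.2
    have hne : F - x ≠ F := by omega
    rw [genK] at hgen
    rw [show genK S F = stdK S F + stdK S F from hgen, hdiff]
    exact Set.ncard_pair hne
end main
end

section
/- Let S be a numerical semigroup with 2K \ K = {F(S) − x₁, …, F(S) − x_r, F(S)} where each x_i is a minimal generator of S. Then: (1) for every i there exist f_j, f_k ∈ PF(S) with f_j + f_k = F(S) + x_i; (2) for every f ∈ PF(S) \ {F(S)}, either F(S) − f ∈ PF(S) or F(S) − f + x_i ∈ PF(S) for some i. -/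
open Set Pointwise

section Aux

variable {S : Set ℤ} {F : ℤ}

lemma memK_iff (hF : IsFrobOf S F) {a : ℤ} : a ∈ stdK S F ↔ F - a ∉ S := by
  constructor
  · exact fun h => h.2
  · intro h
    refine ⟨?_, h⟩
    by_contra hneg
    push_neg at hneg
    exact h (hF.2 _ (by linarith))

lemma mem_maxId {m : ℤ} : m ∈ maxId S ↔ m ∈ S ∧ m ≠ 0 := by
  simp [maxId]

lemma K_ideal (hF : IsFrobOf S F) (hS : IsNumSgrp S) {k s : ℤ}
    (hk : k ∈ stdK S F) (hs : s ∈ S) : k + s ∈ stdK S F := by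
  rw [memK_iff hF] at hk ⊢
  intro h
  have : (F - (k + s)) + s ∈ S := hS.2.1 _ h _ hs
  have heq : (F - (k + s)) + s = F - k := by ring
  rw [heq] at this
  exact hk this

lemma pf_iff (hF : IsFrobOf S F) {f : ℤ} :
    f ∈ PF S S ↔ (F - f ∈ stdK S F ∧ ∀ m ∈ S, m ≠ 0 → F - f - m ∉ stdK S F) := by
  constructor
  · rintro ⟨h1, h2⟩
    refine ⟨(memK_iff hF).mpr (by simpa using h2), ?_⟩
    intro m hm hm0 hK
    have := (memK_iff hF).mp hK
    have heq : F - (F - f - m) = f + m := by ring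
    rw [heq] at this
    exact this (h1 m (mem_maxId.mpr ⟨hm, hm0⟩))
  · rintro ⟨h1, h2⟩
    constructor
    · intro m hm
      rw [mem_maxId] at hm
      by_contra hnot
      refine h2 m hm.1 hm.2 ((memK_iff hF).mpr ?_)
      have heq : F - (F - f - m) = f + m := by ring
      rw [heq]
      exact hnot
    · have := (memK_iff hF).mp h1
      simpa using this

/-- Every element of K can be written as (F - f) + s with f ∈ PF, s ∈ S. -/
lemma red_aux (hF : IsFrobOf S F) (hS : IsNumSgrp S) :
    ∀ n : ℕ, ∀ a : ℤ, a.toNat ≤ n → a ∈ stdK S F →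
      ∃ f ∈ PF S S, ∃ s ∈ S, (F - f) + s = a := by
  intro n
  induction n with
  | zero =>
    intro a h1 h2
    have ha0 : 0 ≤ a := h2.1
    have ha : a = 0 := by omega
    subst ha
    refine ⟨F, ?_, 0, hS.1, by ring⟩
    rw [pf_iff hF]
    constructor
    · simpa using h2
    · intro m hm hm0 hK
      have hmpos : 0 < m := lt_of_le_of_ne (hS.2.2.1 m hm) (Ne.symm hm0)
      have : F - (F - F - m) ∈ S := hF.2 _ (by linarith)
      exact ((memK_iff hF).mp hK) this
  | succ n ih =>
    intro a h1 h2
    by_cases hc : ∃ m ∈ S, m ≠ 0 ∧ a - m ∈ stdK S F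
    · obtain ⟨m, hm, hm0, hK⟩ := hc
      have hmpos : 0 < m := lt_of_le_of_ne (hS.2.2.1 m hm) (Ne.symm hm0)
      have ham : 0 ≤ a - m := hK.1
      have : (a - m).toNat ≤ n := by omega
      obtain ⟨f, hf, s, hs, heq⟩ := ih (a - m) this hK
      exact ⟨f, hf, s + m, hS.2.1 _ hs _ hm, by linarith⟩
    · push_neg at hc
      refine ⟨F - a, ?_, 0, hS.1, by ring⟩
      rw [pf_iff hF]
      have heq : F - (F - a) = a := by ring
      rw [heq]
      exact ⟨h2, fun m hm hm0 hK => hc m hm hm0 hK⟩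

lemma red (hF : IsFrobOf S F) (hS : IsNumSgrp S) {a : ℤ} (ha : a ∈ stdK S F) :
    ∃ f ∈ PF S S, ∃ s ∈ S, (F - f) + s = a :=
  red_aux hF hS a.toNat a le_rfl ha

end Aux

theorem stmt14 (S : Set ℤ) (hS : IsNumSgrp S) (F : ℤ) (hF : IsFrobOf S F)
    (X : Finset ℤ) (hX : ∀ x ∈ X, IsMinGen S x)
    (h2K : (stdK S F + stdK S F) \ stdK S F = (fun x => F - x) '' (X : Set ℤ) ∪ {F}) :
    (∀ x ∈ X, ∃ fj ∈ PF S S, ∃ fk ∈ PF S S, fj + fk = F + x) ∧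
    (∀ f ∈ PF S S \ {F}, F - f ∈ PF S S ∨ ∃ x ∈ X, F - f + x ∈ PF S S) := by
  -- key lemma: if w ∈ S, w ≠ 0, and F - w ∈ K + K, then w ∈ X
  have keylem : ∀ w : ℤ, w ∈ S → w ≠ 0 → F - w ∈ stdK S F + stdK S F → ∃ x ∈ X, x = w := by
    intro w hw hw0 hmem
    have hnK : F - w ∉ stdK S F := by
      intro hK
      exact ((memK_iff hF).mp hK) (by simpa using hw)
    have : F - w ∈ (fun x => F - x) '' (X : Set ℤ) ∪ {F} := by
      rw [← h2K]; exact ⟨hmem, hnK⟩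
    rcases this with h | h
    · obtain ⟨x, hx, hxe⟩ := h
      have hxe' : F - x = F - w := hxe
      exact ⟨x, hx, by linarith⟩
    · exfalso
      have : F - w = F := by simpa using h
      exact hw0 (by linarith)
  have hMM : ∀ x ∈ X, ∀ w ∈ S, w ≠ 0 → x + w ∉ (X : Set ℤ) := by
    -- x + w cannot be in X since it's a sum of two maximal ideal elements
    intro x hx w hw hw0 hcon
    have hxM : x ∈ maxId S := (hX x hx).1
    have := (hX (x + w) hcon).2
    exact this (Set.mem_add.mpr ⟨x, hxM, w, mem_maxId.mpr ⟨hw, hw0⟩, rfl⟩)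
  constructor
  · -- Part (1)
    intro x hx
    have hxS : x ∈ S := (mem_maxId.mp (hX x hx).1).1
    have hx0 : x ≠ 0 := (mem_maxId.mp (hX x hx).1).2
    have hmem : F - x ∈ (stdK S F + stdK S F) \ stdK S F := by
      rw [h2K]; exact Or.inl ⟨x, hx, rfl⟩
    obtain ⟨a, ha, b, hb, hab⟩ := Set.mem_add.mp hmem.1
    obtain ⟨f, hf, s, hs, hfs⟩ := red hF hS ha
    have hbs : b + s ∈ stdK S F := K_ideal hF hS hb hs
    obtain ⟨g, hg, t, ht, hgt⟩ := red hF hS hbs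
    -- (F - f) + (F - g) + t = F - x
    have key : (F - f) + (F - g) + t = F - x := by linarith
    by_cases ht0 : t = 0
    · exact ⟨f, hf, g, hg, by linarith⟩
    · exfalso
      have hxt : x + t ∈ S := hS.2.1 _ hxS _ ht
      have hxt0 : x + t ≠ 0 := by
        have : 0 ≤ x := hS.2.2.1 _ hxS
        have ht1 : 0 < t := lt_of_le_of_ne (hS.2.2.1 _ ht) (Ne.symm ht0)
        omega
      have hFfK : F - f ∈ stdK S F := ((pf_iff hF).mp hf).1
      have hFgK : F - g ∈ stdK S F := ((pf_iff hF).mp hg).1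
      obtain ⟨x', hx', hx'e⟩ := keylem (x + t) hxt hxt0
        (Set.mem_add.mpr ⟨F - f, hFfK, F - g, hFgK, by linarith⟩)
      subst hx'e
      exact hMM x hx t ht ht0 (Finset.mem_coe.mpr hx')
  · -- Part (2)
    intro f hf
    obtain ⟨hfPF, hfne⟩ := hf
    have hfne' : f ≠ F := by simpa using hfne
    obtain ⟨hFfK, hmax⟩ := (pf_iff hF).mp hfPF
    -- f ∈ K, i.e. F - f ∉ S
    have hfK : f ∈ stdK S F := by
      rw [memK_iff hF]
      intro hFfS
      have hFf0 : F - f ≠ 0 := fun h => hfne' (by linarith)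
      have : f + (F - f) ∈ S := hfPF.1 (F - f) (mem_maxId.mpr ⟨hFfS, hFf0⟩)
      have heq : f + (F - f) = F := by ring
      rw [heq] at this
      exact hF.1 this
    by_cases hcase : ∀ m ∈ S, m ≠ 0 → f - m ∉ stdK S F
    · left
      rw [pf_iff hF]
      have heq : F - (F - f) = f := by ring
      rw [heq]
      exact ⟨hfK, fun m hm hm0 => hcase m hm hm0⟩
    · right
      push_neg at hcase
      obtain ⟨m, hm, hm0, hmK⟩ := hcase
      obtain ⟨x, hxX, hxm⟩ := keylem m hm hm0
        (Set.mem_add.mpr ⟨F - f, hFfK, f - m, hmK, by ring⟩)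
      subst hxm
      refine ⟨x, hxX, ?_⟩
      rw [pf_iff hF]
      have heq : F - (F - f + x) = f - x := by ring
      rw [heq]
      refine ⟨hmK, fun m' hm' hm'0 hcon => ?_⟩
      have hxm' : x + m' ∈ S := hS.2.1 _ hm _ hm'
      have hxm'0 : x + m' ≠ 0 := by
        have := hS.2.2.1 _ hm
        have hm'pos : 0 < m' := lt_of_le_of_ne (hS.2.2.1 _ hm') (Ne.symm hm'0)
        omega
      obtain ⟨x', hx', hx'e⟩ := keylem (x + m') hxm' hxm'0
        (Set.mem_add.mpr ⟨F - f, hFfK, f - x - m', hcon, by ring⟩)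
      subst hx'e
      exact hMM x hxX m' hm' hm'0 (Finset.mem_coe.mpr hx')
end
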